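/- Let j, k ≥ 1 and let Υ ⊆ F_{j,k}. Let A_{n,k}^Υ be the number of F ∈ F_{n,k} with no Υ-matches (A_{0,k}^Υ = 1), and let E_{n,k}^Υ be the number of F ∈ F_{n,k} having exactly one Υ-match, which moreover starts at position n−j+1. Then for all n ≥ 0: binom(k(n+1), k) · A_{n,k}^Υ = A_{n+1,k}^Υ + E_{n+1,k}^Υ. -/

import Mathlib

/-- `F` is a filling of the `k × n` rectangle (row `i`, `1 ≤ i ≤ k`, counted from the
bottom; column `j`, `1 ≤ j ≤ n`) with the integers `1, …, kn`, each used exactly once,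
whose entries strictly increase up each column.  Cells outside the rectangle carry `0`. -/
def IsFilling (n k : ℕ) (F : ℕ → ℕ → ℕ) : Prop :=
  (∀ i j, F i j ≠ 0 → 1 ≤ i ∧ i ≤ k ∧ 1 ≤ j ∧ j ≤ n) ∧
  Set.BijOn (fun p : ℕ × ℕ => F p.1 p.2) (Set.Icc 1 k ×ˢ Set.Icc 1 n) (Set.Icc 1 (k * n)) ∧
  ∀ i j, 1 ≤ i → i < k → 1 ≤ j → j ≤ n → F i j < F (i + 1) j

/-- The entries of `F` in columns `i, …, i + j - 1` are in the same relative order as the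
`k × j` pattern `P`; i.e. `F` has a `P`-match starting at position `i`. -/
def MatchAt (j k : ℕ) (P F : ℕ → ℕ → ℕ) (i : ℕ) : Prop :=
  ∀ a b c d, 1 ≤ a → a ≤ k → 1 ≤ b → b ≤ j → 1 ≤ c → c ≤ k → 1 ≤ d → d ≤ j →
    (F a (i - 1 + b) < F c (i - 1 + d) ↔ P a b < P c d)

/-- `full_n^Υ`: the number of fillings `F ∈ F_{n,k}` having `Υ`-matches starting at
every position `1, …, n-1` (for two-column patterns `Υ ⊆ F_{2,k}`). -/
noncomputable def fullCount (n k : ℕ) (U : Set (ℕ → ℕ → ℕ)) : ℕ :=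
  Nat.card {F : ℕ → ℕ → ℕ // IsFilling n k F ∧
    ∀ i, 1 ≤ i → i ≤ n - 1 → ∃ P ∈ U, MatchAt 2 k P F i}

/-- `F` has an `Υ`-match starting at position `i` (for `k × j` patterns `Υ`). -/
def HasUMatch (n j k : ℕ) (U : Set (ℕ → ℕ → ℕ)) (F : ℕ → ℕ → ℕ) (i : ℕ) : Prop :=
  1 ≤ i ∧ i + j ≤ n + 1 ∧ ∃ P ∈ U, MatchAt j k P F i

/-- `A_{n,k}^Υ`: the number of fillings `F ∈ F_{n,k}` with no `Υ`-matches. -/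
noncomputable def noMatchCountJ (n j k : ℕ) (U : Set (ℕ → ℕ → ℕ)) : ℕ :=
  Nat.card {F : ℕ → ℕ → ℕ // IsFilling n k F ∧ ∀ i, ¬ HasUMatch n j k U F i}

/-- `E_{n,k}^Υ`: the number of fillings `F ∈ F_{n,k}` with exactly one `Υ`-match,
which starts at position `n - j + 1`. -/
noncomputable def endMatchCount (n j k : ℕ) (U : Set (ℕ → ℕ → ℕ)) : ℕ :=
  Nat.card {F : ℕ → ℕ → ℕ // IsFilling n k F ∧
    ∀ i, HasUMatch n j k U F i ↔ i = n + 1 - j}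

/- ## rank / enumeration helpers -/

noncomputable def enum (t : Finset ℕ) (y : ℕ) : ℕ :=
  if h : y - 1 < t.card then ((t.orderIsoOfFin rfl) ⟨y - 1, h⟩ : ℕ) else 0

noncomputable def rk (t : Finset ℕ) (v : ℕ) : ℕ :=
  if h : v ∈ t then ((t.orderIsoOfFin rfl).symm ⟨v, h⟩ : Fin t.card).val + 1 else 0

lemma rk_pos {t : Finset ℕ} {v : ℕ} (h : v ∈ t) : 1 ≤ rk t v := by
  simp [rk, h]

lemma rk_le {t : Finset ℕ} {v : ℕ} (h : v ∈ t) : rk t v ≤ t.card := by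
  simp only [rk, dif_pos h]
  exact ((t.orderIsoOfFin rfl).symm ⟨v, h⟩).isLt

lemma enum_mem {t : Finset ℕ} {y : ℕ} (h1 : 1 ≤ y) (h2 : y ≤ t.card) : enum t y ∈ t := by
  have h : y - 1 < t.card := by omega
  simp only [enum, dif_pos h]
  exact ((t.orderIsoOfFin rfl) ⟨y - 1, h⟩).2

lemma enum_rk {t : Finset ℕ} {v : ℕ} (h : v ∈ t) : enum t (rk t v) = v := by
  simp only [rk, dif_pos h, enum]
  have h2 : (((t.orderIsoOfFin rfl).symm ⟨v, h⟩ : Fin t.card).val + 1) - 1 < t.card :=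
    ((t.orderIsoOfFin rfl).symm ⟨v, h⟩).isLt
  rw [dif_pos h2]
  have : (⟨(((t.orderIsoOfFin rfl).symm ⟨v, h⟩ : Fin t.card).val + 1) - 1, h2⟩ : Fin t.card)
      = (t.orderIsoOfFin rfl).symm ⟨v, h⟩ := by
    ext; simp
  rw [this, OrderIso.apply_symm_apply]

lemma rk_enum {t : Finset ℕ} {y : ℕ} (h1 : 1 ≤ y) (h2 : y ≤ t.card) : rk t (enum t y) = y := by
  have h : y - 1 < t.card := by omega
  have hm : enum t y ∈ t := enum_mem h1 h2
  simp only [rk, dif_pos hm]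
  have : (⟨enum t y, hm⟩ : {x // x ∈ t}) = (t.orderIsoOfFin rfl) ⟨y - 1, h⟩ := by
    simp only [enum, dif_pos h]
  rw [this, OrderIso.symm_apply_apply]
  simp only [Fin.val_mk]
  omega

lemma rk_lt_rk {t : Finset ℕ} {v w : ℕ} (hv : v ∈ t) (hw : w ∈ t) :
    rk t v < rk t w ↔ v < w := by
  simp only [rk, dif_pos hv, dif_pos hw, Nat.add_lt_add_iff_right]
  rw [← Fin.lt_iff_val_lt_val, (t.orderIsoOfFin rfl).symm.lt_iff_lt]
  rfl

lemma enum_lt_enum {t : Finset ℕ} {y z : ℕ} (hy1 : 1 ≤ y) (hy2 : y ≤ t.card)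
    (hz1 : 1 ≤ z) (hz2 : z ≤ t.card) : enum t y < enum t z ↔ y < z := by
  rw [← rk_lt_rk (enum_mem hy1 hy2) (enum_mem hz1 hz2), rk_enum hy1 hy2, rk_enum hz1 hz2]

lemma rk_inj {t : Finset ℕ} {v w : ℕ} (hv : v ∈ t) (hw : w ∈ t)
    (h : rk t v = rk t w) : v = w := by
  by_contra hne
  rcases Nat.lt_or_ge v w with h' | h'
  · exact absurd h (Nat.ne_of_lt ((rk_lt_rk hv hw).mpr h'))
  · have : w < v := by omega
    exact absurd h.symm (Nat.ne_of_lt ((rk_lt_rk hw hv).mpr this))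

lemma enum_inj {t : Finset ℕ} {y z : ℕ} (hy1 : 1 ≤ y) (hy2 : y ≤ t.card)
    (hz1 : 1 ≤ z) (hz2 : z ≤ t.card) (h : enum t y = enum t z) : y = z := by
  rw [← rk_enum hy1 hy2, ← rk_enum hz1 hz2, h]

/- ## basic facts about fillings -/

lemma IsFilling.mem_Icc {n k : ℕ} {F : ℕ → ℕ → ℕ} (hF : IsFilling n k F) {i j : ℕ}
    (hi1 : 1 ≤ i) (hi2 : i ≤ k) (hj1 : 1 ≤ j) (hj2 : j ≤ n) :
    1 ≤ F i j ∧ F i j ≤ k * n :=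
  hF.2.1.mapsTo (show ((i, j) : ℕ × ℕ) ∈ _ from ⟨⟨hi1, hi2⟩, hj1, hj2⟩)

lemma IsFilling.inj {n k : ℕ} {F : ℕ → ℕ → ℕ} (hF : IsFilling n k F) {i j i' j' : ℕ}
    (hi1 : 1 ≤ i) (hi2 : i ≤ k) (hj1 : 1 ≤ j) (hj2 : j ≤ n)
    (hi1' : 1 ≤ i') (hi2' : i' ≤ k) (hj1' : 1 ≤ j') (hj2' : j' ≤ n)
    (h : F i j = F i' j') : i = i' ∧ j = j' := by
  have h2 : ((i, j) : ℕ × ℕ) = (i', j') :=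
    hF.2.1.injOn (show ((i, j) : ℕ × ℕ) ∈ _ from ⟨⟨hi1, hi2⟩, hj1, hj2⟩)
      (show ((i', j') : ℕ × ℕ) ∈ _ from ⟨⟨hi1', hi2'⟩, hj1', hj2'⟩) h
  exact ⟨congrArg Prod.fst h2, congrArg Prod.snd h2⟩

lemma IsFilling.zero {n k : ℕ} {F : ℕ → ℕ → ℕ} (hF : IsFilling n k F) {i j : ℕ}
    (h : ¬(1 ≤ i ∧ i ≤ k ∧ 1 ≤ j ∧ j ≤ n)) : F i j = 0 := by
  by_contra h'
  exact h (hF.1 i j h')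

lemma IsFilling.col_mono {n k : ℕ} {F : ℕ → ℕ → ℕ} (hF : IsFilling n k F) :
    ∀ c a jc, 1 ≤ a → a < c → c ≤ k → 1 ≤ jc → jc ≤ n → F a jc < F c jc := by
  intro c
  induction c with
  | zero => intro a jc _ h _ _ _; omega
  | succ c ih =>
    intro a jc ha hac hc hj1 hj2
    rcases Nat.lt_or_ge a c with h' | h'
    · exact lt_trans (ih a jc ha h' (by omega) hj1 hj2)
        (hF.2.2 c jc (by omega) (by omega) hj1 hj2)
    · have : a = c := by omega
      subst this
      exact hF.2.2 a jc ha (by omega) hj1 hj2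

lemma fillings_finite (n k : ℕ) : {F : ℕ → ℕ → ℕ | IsFilling n k F}.Finite := by
  have hinj : Function.Injective
      (fun (F : {F : ℕ → ℕ → ℕ // IsFilling n k F}) =>
        (fun p : Fin (k + 1) × Fin (n + 1) =>
          (⟨F.1 p.1 p.2, by
            rcases eq_or_ne (F.1 p.1 p.2) 0 with h | h
            · omega
            · have hb := F.2.1 p.1 p.2 h
              have := (F.2.mem_Icc hb.1 hb.2.1 hb.2.2.1 hb.2.2.2).2
              omega⟩ : Fin (k * n + 1)))) := by
    intro F G h
    apply Subtype.ext
    funext i j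
    by_cases hb : 1 ≤ i ∧ i ≤ k ∧ 1 ≤ j ∧ j ≤ n
    · have := congrFun h (⟨i, by omega⟩, ⟨j, by omega⟩)
      simpa using congrArg Fin.val this
    · rw [F.2.zero hb, G.2.zero hb]
  have : Finite {F : ℕ → ℕ → ℕ // IsFilling n k F} := Finite.of_injective _ hinj
  exact Set.finite_coe_iff.mp this

lemma matchAt_congr {n jj k : ℕ} {P F G : ℕ → ℕ → ℕ} {i : ℕ} (hi : 1 ≤ i)
    (hij : i + jj ≤ n + 1)
    (h : ∀ a b c d, 1 ≤ a → a ≤ k → 1 ≤ b → b ≤ n → 1 ≤ c → c ≤ k → 1 ≤ d → d ≤ n →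
      (F a b < F c d ↔ G a b < G c d)) :
    MatchAt jj k P F i ↔ MatchAt jj k P G i := by
  constructor <;> intro hm a b c d ha1 ha2 hb1 hb2 hc1 hc2 hd1 hd2
  · rw [← h a (i - 1 + b) c (i - 1 + d) ha1 ha2 (by omega) (by omega) hc1 hc2 (by omega)
      (by omega)]
    exact hm a b c d ha1 ha2 hb1 hb2 hc1 hc2 hd1 hd2
  · rw [h a (i - 1 + b) c (i - 1 + d) ha1 ha2 (by omega) (by omega) hc1 hc2 (by omega)
      (by omega)]
    exact hm a b c d ha1 ha2 hb1 hb2 hc1 hc2 hd1 hd2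

lemma mono_fix {k : ℕ} {f : ℕ → ℕ} (hmono : ∀ a b, 1 ≤ a → a < b → b ≤ k → f a < f b)
    (hlb : ∀ a, 1 ≤ a → a ≤ k → 1 ≤ f a) (hub : ∀ a, 1 ≤ a → a ≤ k → f a ≤ k) :
    ∀ a, 1 ≤ a → a ≤ k → f a = a := by
  have lower : ∀ a, 1 ≤ a → a ≤ k → a ≤ f a := by
    intro a
    induction a with
    | zero => omega
    | succ a ih =>
      intro _ ha
      rcases Nat.eq_or_lt_of_le (show 1 ≤ a + 1 by omega) with h | h
      · have := hlb (a + 1) (by omega) ha; omega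
      · have h1 := ih (by omega) (by omega)
        have h2 := hmono a (a + 1) (by omega) (by omega) ha
        omega
  have upper : ∀ d a, 1 ≤ a → a + d = k → f a ≤ a := by
    intro d
    induction d with
    | zero => intro a ha hak; have := hub a ha (by omega); omega
    | succ d ih =>
      intro a ha hak
      have h1 := ih (a + 1) (by omega) (by omega)
      have h2 := hmono a (a + 1) ha (by omega) (by omega)
      omega
  intro a ha hak
  have := lower a ha hak
  have := upper (k - a) a ha (by omega)
  omega

/- ## the last-column / reduction constructions -/

def lastSet (n k : ℕ) (F : ℕ → ℕ → ℕ) : Finset ℕ :=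
  (Finset.Icc 1 k).image (fun a => F a (n + 1))

noncomputable def reduceF (n k : ℕ) (F : ℕ → ℕ → ℕ) : ℕ → ℕ → ℕ := fun i j =>
  if 1 ≤ i ∧ i ≤ k ∧ 1 ≤ j ∧ j ≤ n then
    rk (Finset.Icc 1 (k * (n + 1)) \ lastSet n k F) (F i j) else 0

noncomputable def expandF (n k : ℕ) (L : Finset ℕ) (G : ℕ → ℕ → ℕ) : ℕ → ℕ → ℕ := fun i j =>
  if 1 ≤ i ∧ i ≤ k ∧ 1 ≤ j ∧ j ≤ n then enum (Finset.Icc 1 (k * (n + 1)) \ L) (G i j)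
  else if 1 ≤ i ∧ i ≤ k ∧ j = n + 1 then enum L i else 0

section Main

variable {n k : ℕ} {F : ℕ → ℕ → ℕ}

lemma lastSet_subset (hF : IsFilling (n + 1) k F) :
    lastSet n k F ⊆ Finset.Icc 1 (k * (n + 1)) := by
  intro v hv
  simp only [lastSet, Finset.mem_image, Finset.mem_Icc] at hv
  obtain ⟨a, ⟨ha1, ha2⟩, rfl⟩ := hv
  have := hF.mem_Icc ha1 ha2 (by omega) (le_refl (n + 1))
  simp only [Finset.mem_Icc]
  exact this

lemma lastSet_card (hF : IsFilling (n + 1) k F) : (lastSet n k F).card = k := by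
  rw [lastSet, Finset.card_image_of_injOn, Nat.card_Icc]
  · omega
  · intro a ha b hb h
    simp only [Finset.coe_Icc, Set.mem_Icc] at ha hb
    exact (hF.inj ha.1 ha.2 (by omega) le_rfl hb.1 hb.2 (by omega) le_rfl h).1

lemma compl_card (hF : IsFilling (n + 1) k F) :
    (Finset.Icc 1 (k * (n + 1)) \ lastSet n k F).card = k * n := by
  rw [Finset.card_sdiff_of_subset (lastSet_subset hF), lastSet_card hF, Nat.card_Icc]
  rw [Nat.mul_succ]
  omega

lemma mem_compl (hF : IsFilling (n + 1) k F) {i j : ℕ}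
    (hi1 : 1 ≤ i) (hi2 : i ≤ k) (hj1 : 1 ≤ j) (hj2 : j ≤ n) :
    F i j ∈ Finset.Icc 1 (k * (n + 1)) \ lastSet n k F := by
  rw [Finset.mem_sdiff]
  constructor
  · have := hF.mem_Icc hi1 hi2 hj1 (by omega)
    simp only [Finset.mem_Icc]; exact this
  · intro hmem
    simp only [lastSet, Finset.mem_image, Finset.mem_Icc] at hmem
    obtain ⟨a, ⟨ha1, ha2⟩, ha⟩ := hmem
    have := hF.inj ha1 ha2 (by omega) le_rfl hi1 hi2 hj1 (by omega) ha
    omega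

lemma reduce_val (hF : IsFilling (n + 1) k F) {i j : ℕ}
    (hi1 : 1 ≤ i) (hi2 : i ≤ k) (hj1 : 1 ≤ j) (hj2 : j ≤ n) :
    reduceF n k F i j = rk (Finset.Icc 1 (k * (n + 1)) \ lastSet n k F) (F i j) := by
  simp only [reduceF, if_pos (show 1 ≤ i ∧ i ≤ k ∧ 1 ≤ j ∧ j ≤ n from ⟨hi1, hi2, hj1, hj2⟩)]

lemma reduce_isFilling (hF : IsFilling (n + 1) k F) : IsFilling n k (reduceF n k F) := by
  set t := Finset.Icc 1 (k * (n + 1)) \ lastSet n k F with ht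
  have hc : t.card = k * n := compl_card hF
  refine ⟨?_, ⟨?_, ?_, ?_⟩, ?_⟩
  · intro i j hne
    by_contra hcon
    exact hne (by simp only [reduceF, if_neg hcon])
  · -- MapsTo
    rintro ⟨i, j⟩ ⟨⟨hi1, hi2⟩, hj1, hj2⟩
    have hmem := mem_compl hF hi1 hi2 hj1 hj2
    simp only [reduce_val hF hi1 hi2 hj1 hj2]
    exact ⟨rk_pos hmem, hc ▸ rk_le hmem⟩
  · -- InjOn
    rintro ⟨i, j⟩ ⟨⟨hi1, hi2⟩, hj1, hj2⟩ ⟨i', j'⟩ ⟨⟨hi1', hi2'⟩, hj1', hj2'⟩ h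
    simp only [reduce_val hF hi1 hi2 hj1 hj2, reduce_val hF hi1' hi2' hj1' hj2'] at h
    have hv := rk_inj (mem_compl hF hi1 hi2 hj1 hj2) (mem_compl hF hi1' hi2' hj1' hj2') h
    have := hF.inj hi1 hi2 hj1 (by omega) hi1' hi2' hj1' (by omega) hv
    exact Prod.ext this.1 this.2
  · -- SurjOn
    intro y hy
    obtain ⟨hy1, hy2⟩ := hy
    have hv : enum t y ∈ t := enum_mem hy1 (by rw [hc]; omega)
    have hvIcc : enum t y ∈ Finset.Icc 1 (k * (n + 1)) := (Finset.mem_sdiff.mp hv).1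
    have hvL : enum t y ∉ lastSet n k F := (Finset.mem_sdiff.mp hv).2
    rw [Finset.mem_Icc] at hvIcc
    obtain ⟨⟨i, j⟩, hmem, heq⟩ := hF.2.1.surjOn (show enum t y ∈ Set.Icc 1 (k * (n + 1)) from hvIcc)
    obtain ⟨⟨hi1, hi2⟩, hj1, hj2⟩ := hmem
    simp only at heq
    have hjn : j ≤ n := by
      rcases Nat.lt_or_ge j (n + 1) with h' | h'
      · omega
      · exfalso
        apply hvL
        have : j = n + 1 := by omega
        subst this
        simp only [lastSet, Finset.mem_image, Finset.mem_Icc]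
        exact ⟨i, ⟨hi1, hi2⟩, heq⟩
    refine ⟨(i, j), ⟨⟨hi1, hi2⟩, hj1, hjn⟩, ?_⟩
    show reduceF n k F i j = y
    rw [reduce_val hF hi1 hi2 hj1 hjn, heq, ← ht]
    exact rk_enum hy1 (by rw [hc]; omega)
  · -- column increase
    intro i j hi1 hik hj1 hj2
    rw [reduce_val hF hi1 (by omega) hj1 hj2, reduce_val hF (by omega) (by omega) hj1 hj2]
    rw [rk_lt_rk (mem_compl hF hi1 (by omega) hj1 hj2) (mem_compl hF (by omega) (by omega) hj1 hj2)]
    exact hF.2.2 i j hi1 (by omega) hj1 (by omega)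

lemma reduce_orderIff (hF : IsFilling (n + 1) k F) {a b c d : ℕ}
    (ha1 : 1 ≤ a) (ha2 : a ≤ k) (hb1 : 1 ≤ b) (hb2 : b ≤ n)
    (hc1 : 1 ≤ c) (hc2 : c ≤ k) (hd1 : 1 ≤ d) (hd2 : d ≤ n) :
    (F a b < F c d ↔ reduceF n k F a b < reduceF n k F c d) := by
  simp only [reduceF, if_pos (show 1 ≤ a ∧ a ≤ k ∧ 1 ≤ b ∧ b ≤ n from ⟨ha1, ha2, hb1, hb2⟩),
    if_pos (show 1 ≤ c ∧ c ≤ k ∧ 1 ≤ d ∧ d ≤ n from ⟨hc1, hc2, hd1, hd2⟩)]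
  exact (rk_lt_rk (mem_compl hF ha1 ha2 hb1 hb2) (mem_compl hF hc1 hc2 hd1 hd2)).symm

lemma reduce_noMatch {jp : ℕ} {U : Set (ℕ → ℕ → ℕ)} (hF : IsFilling (n + 1) k F)
    (hmid : ∀ i, i + jp ≤ n + 1 → ¬ HasUMatch (n + 1) jp k U F i) :
    ∀ i, ¬ HasUMatch n jp k U (reduceF n k F) i := by
  intro i hU'
  obtain ⟨hi1, hij, P, hP, hm⟩ := hU'
  have hm' : MatchAt jp k P F i := by
    rw [matchAt_congr hi1 hij (fun a b c d ha1 ha2 hb1 hb2 hc1 hc2 hd1 hd2 =>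
      reduce_orderIff hF ha1 ha2 hb1 hb2 hc1 hc2 hd1 hd2)]
    exact hm
  exact hmid i hij ⟨hi1, by omega, P, hP, hm'⟩

end Main

section Expand

variable {n k : ℕ} {L : Finset ℕ} {G : ℕ → ℕ → ℕ}

lemma expand_in_val {i j : ℕ} (hi1 : 1 ≤ i) (hi2 : i ≤ k) (hj1 : 1 ≤ j) (hj2 : j ≤ n) :
    expandF n k L G i j = enum (Finset.Icc 1 (k * (n + 1)) \ L) (G i j) := by
  simp only [expandF, if_pos (show 1 ≤ i ∧ i ≤ k ∧ 1 ≤ j ∧ j ≤ n from ⟨hi1, hi2, hj1, hj2⟩)]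

lemma expand_last_val {i : ℕ} (hi1 : 1 ≤ i) (hi2 : i ≤ k) :
    expandF n k L G i (n + 1) = enum L i := by
  simp only [expandF]
  rw [if_neg (by omega)]
  simp [hi1, hi2]

lemma compl_card' (hL1 : L ⊆ Finset.Icc 1 (k * (n + 1))) (hL2 : L.card = k) : (Finset.Icc 1 (k * (n + 1)) \ L).card = k * n := by
  rw [Finset.card_sdiff_of_subset hL1, hL2, Nat.card_Icc, Nat.mul_succ]
  omega

lemma expand_isFilling (hL1 : L ⊆ Finset.Icc 1 (k * (n + 1))) (hL2 : L.card = k)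
    (hG : IsFilling n k G) : IsFilling (n + 1) k (expandF n k L G) := by
  set t := Finset.Icc 1 (k * (n + 1)) \ L with ht
  have hc : t.card = k * n := compl_card' hL1 hL2
  have hmemt : ∀ {i j : ℕ}, 1 ≤ i → i ≤ k → 1 ≤ j → j ≤ n →
      expandF n k L G i j ∈ t := by
    intro i j hi1 hi2 hj1 hj2
    rw [expand_in_val hi1 hi2 hj1 hj2, ← ht]
    have := hG.mem_Icc hi1 hi2 hj1 hj2
    exact enum_mem this.1 (by rw [hc]; omega)
  have hmemL : ∀ {i : ℕ}, 1 ≤ i → i ≤ k → expandF n k L G i (n + 1) ∈ L := by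
    intro i hi1 hi2
    rw [expand_last_val hi1 hi2]
    exact enum_mem hi1 (by rw [hL2]; omega)
  refine ⟨?_, ⟨?_, ?_, ?_⟩, ?_⟩
  · intro i j hne
    by_contra hcon
    apply hne
    simp only [expandF]
    rw [if_neg (by omega), if_neg (by omega)]
  · -- MapsTo
    rintro ⟨i, j⟩ ⟨⟨hi1, hi2⟩, hj1, hj2⟩
    rcases Nat.lt_or_ge j (n + 1) with h' | h'
    · have := hmemt hi1 hi2 hj1 (by omega)
      rw [ht, Finset.mem_sdiff, Finset.mem_Icc] at this
      exact this.1
    · have hj : j = n + 1 := by omega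
      subst hj
      have := hL1 (hmemL hi1 hi2)
      rw [Finset.mem_Icc] at this
      exact this
  · -- InjOn
    rintro ⟨i, j⟩ ⟨⟨hi1, hi2⟩, hj1, hj2⟩ ⟨i', j'⟩ ⟨⟨hi1', hi2'⟩, hj1', hj2'⟩ h
    simp only at h
    rcases Nat.lt_or_ge j (n + 1) with h1 | h1 <;> rcases Nat.lt_or_ge j' (n + 1) with h2 | h2
    · -- both inner
      have hjn : j ≤ n := by omega
      have hjn' : j' ≤ n := by omega
      rw [expand_in_val hi1 hi2 hj1 hjn, expand_in_val hi1' hi2' hj1' hjn'] at h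
      have g1 := hG.mem_Icc hi1 hi2 hj1 hjn
      have g2 := hG.mem_Icc hi1' hi2' hj1' hjn'
      have := enum_inj g1.1 (by rw [hc]; omega) g2.1 (by rw [hc]; omega) h
      have := hG.inj hi1 hi2 hj1 hjn hi1' hi2' hj1' hjn' this
      exact Prod.ext this.1 this.2
    · exfalso
      have hj' : j' = n + 1 := by omega
      subst hj'
      have m1 := hmemt hi1 hi2 hj1 (by omega)
      rw [h] at m1
      have m2 := hmemL hi1' hi2'
      rw [ht, Finset.mem_sdiff] at m1
      exact m1.2 m2
    · exfalso
      have hj : j = n + 1 := by omega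
      subst hj
      have m1 := hmemt hi1' hi2' hj1' (by omega)
      rw [← h] at m1
      have m2 := hmemL hi1 hi2
      rw [ht, Finset.mem_sdiff] at m1
      exact m1.2 m2
    · have hj : j = n + 1 := by omega
      have hj' : j' = n + 1 := by omega
      subst hj; subst hj'
      rw [expand_last_val hi1 hi2, expand_last_val hi1' hi2'] at h
      have := enum_inj hi1 (by rw [hL2]; omega) hi1' (by rw [hL2]; omega) h
      exact Prod.ext this rfl
  · -- SurjOn
    intro v hv
    obtain ⟨hv1, hv2⟩ := hv
    by_cases hvL : v ∈ L
    · refine ⟨(rk L v, n + 1), ⟨⟨rk_pos hvL, by rw [← hL2]; exact rk_le hvL⟩, by omega, le_rfl⟩, ?_⟩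
      show expandF n k L G (rk L v) (n + 1) = v
      rw [expand_last_val (rk_pos hvL) (by rw [← hL2]; exact rk_le hvL)]
      exact enum_rk hvL
    · have hvt : v ∈ t := by
        rw [ht, Finset.mem_sdiff, Finset.mem_Icc]
        exact ⟨⟨hv1, hv2⟩, hvL⟩
      have hy1 : 1 ≤ rk t v := rk_pos hvt
      have hy2 : rk t v ≤ k * n := by rw [← hc]; exact rk_le hvt
      obtain ⟨⟨i, j⟩, hmem, heq⟩ := hG.2.1.surjOn (show rk t v ∈ Set.Icc 1 (k * n) from ⟨hy1, hy2⟩)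
      obtain ⟨⟨hi1, hi2⟩, hj1, hj2⟩ := hmem
      simp only at heq
      refine ⟨(i, j), ⟨⟨hi1, hi2⟩, hj1, by omega⟩, ?_⟩
      show expandF n k L G i j = v
      rw [expand_in_val hi1 hi2 hj1 hj2, heq, ← ht]
      exact enum_rk hvt
  · -- column increase
    intro i j hi1 hik hj1 hj2
    rcases Nat.lt_or_ge j (n + 1) with h' | h'
    · have hjn : j ≤ n := by omega
      rw [expand_in_val hi1 (by omega) hj1 hjn, expand_in_val (by omega) (by omega) hj1 hjn]
      have g1 := hG.mem_Icc hi1 (by omega : i ≤ k) hj1 hjn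
      have g2 := hG.mem_Icc (by omega : 1 ≤ i + 1) (by omega : i + 1 ≤ k) hj1 hjn
      rw [← ht, enum_lt_enum g1.1 (by rw [hc]; omega) g2.1 (by rw [hc]; omega)]
      exact hG.2.2 i j hi1 (by omega) hj1 hjn
    · have hj : j = n + 1 := by omega
      subst hj
      rw [expand_last_val hi1 (by omega), expand_last_val (by omega) (by omega)]
      rw [enum_lt_enum hi1 (by rw [hL2]; omega) (by omega) (by rw [hL2]; omega)]
      omega

lemma expand_orderIff (hL1 : L ⊆ Finset.Icc 1 (k * (n + 1))) (hL2 : L.card = k)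
    (hG : IsFilling n k G) {a b c d : ℕ}
    (ha1 : 1 ≤ a) (ha2 : a ≤ k) (hb1 : 1 ≤ b) (hb2 : b ≤ n)
    (hc1 : 1 ≤ c) (hc2 : c ≤ k) (hd1 : 1 ≤ d) (hd2 : d ≤ n) :
    (expandF n k L G a b < expandF n k L G c d ↔ G a b < G c d) := by
  rw [expand_in_val ha1 ha2 hb1 hb2, expand_in_val hc1 hc2 hd1 hd2]
  have h1 := hG.mem_Icc ha1 ha2 hb1 hb2
  have h2 := hG.mem_Icc hc1 hc2 hd1 hd2
  have hc := compl_card' hL1 hL2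
  exact enum_lt_enum h1.1 (by omega) h2.1 (by omega)

lemma expand_noMid (hL1 : L ⊆ Finset.Icc 1 (k * (n + 1))) (hL2 : L.card = k)
    (hG : IsFilling n k G) {jp : ℕ} {U : Set (ℕ → ℕ → ℕ)}
    (hGm : ∀ i, ¬ HasUMatch n jp k U G i) :
    ∀ i, i + jp ≤ n + 1 → ¬ HasUMatch (n + 1) jp k U (expandF n k L G) i := by
  intro i hij hU'
  obtain ⟨hi1, _, P, hP, hm⟩ := hU'
  have hm' : MatchAt jp k P G i := by
    rw [← matchAt_congr hi1 hij (fun a b c d ha1 ha2 hb1 hb2 hc1 hc2 hd1 hd2 =>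
      expand_orderIff hL1 hL2 hG ha1 ha2 hb1 hb2 hc1 hc2 hd1 hd2)]
    exact hm
  exact hGm i ⟨hi1, hij, P, hP, hm'⟩

end Expand

section Inverses

variable {n k : ℕ}

lemma mem_lastSet {F : ℕ → ℕ → ℕ} {a : ℕ} (ha1 : 1 ≤ a) (ha2 : a ≤ k) :
    F a (n + 1) ∈ lastSet n k F :=
  Finset.mem_image.mpr ⟨a, Finset.mem_Icc.mpr ⟨ha1, ha2⟩, rfl⟩

set_option maxHeartbeats 2000000 in
lemma expand_reduce {F : ℕ → ℕ → ℕ} (hF : IsFilling (n + 1) k F) :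
    expandF n k (lastSet n k F) (reduceF n k F) = F := by
  have hLc : (lastSet n k F).card = k := lastSet_card hF
  have hlast : ∀ a, 1 ≤ a → a ≤ k → rk (lastSet n k F) (F a (n + 1)) = a := by
    apply mono_fix (k := k) (f := fun a => rk (lastSet n k F) (F a (n + 1)))
    · intro a b ha hab hb
      rw [rk_lt_rk (mem_lastSet ha (by omega)) (mem_lastSet (by omega) hb)]
      exact hF.col_mono b a (n + 1) ha hab hb (by omega) le_rfl
    · intro a ha hak
      exact rk_pos (mem_lastSet ha hak)
    · intro a ha hak
      have := rk_le (mem_lastSet (n := n) (k := k) (F := F) ha hak)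
      omega
  funext i j
  by_cases h1 : 1 ≤ i ∧ i ≤ k ∧ 1 ≤ j ∧ j ≤ n
  · obtain ⟨hi1, hi2, hj1, hj2⟩ := h1
    rw [expand_in_val hi1 hi2 hj1 hj2, reduce_val hF hi1 hi2 hj1 hj2]
    exact enum_rk (mem_compl hF hi1 hi2 hj1 hj2)
  · by_cases h2 : 1 ≤ i ∧ i ≤ k ∧ j = n + 1
    · obtain ⟨hi1, hi2, hj⟩ := h2
      subst hj
      rw [expand_last_val hi1 hi2]
      conv_rhs => rw [← enum_rk (mem_lastSet (n := n) (k := k) (F := F) hi1 hi2)]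
      rw [hlast i hi1 hi2]
    · have hz : expandF n k (lastSet n k F) (reduceF n k F) i j = 0 := by
        simp only [expandF]
        rw [if_neg h1, if_neg h2]
      rw [hz, hF.zero (by omega)]

lemma reduce_expand_last {L : Finset ℕ} {G : ℕ → ℕ → ℕ}
    (hL1 : L ⊆ Finset.Icc 1 (k * (n + 1))) (hL2 : L.card = k) (hG : IsFilling n k G) :
    lastSet n k (expandF n k L G) = L := by
  have hsub : lastSet n k (expandF n k L G) ⊆ L := by
    intro v hv
    simp only [lastSet, Finset.mem_image, Finset.mem_Icc] at hv
    obtain ⟨a, ⟨ha1, ha2⟩, rfl⟩ := hv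
    rw [expand_last_val ha1 ha2]
    exact enum_mem ha1 (by rw [hL2]; omega)
  apply Finset.eq_of_subset_of_card_le hsub
  have hcard : (lastSet n k (expandF n k L G)).card = k := by
    rw [lastSet, Finset.card_image_of_injOn, Nat.card_Icc]
    · omega
    · intro a ha b hb h
      simp only [Finset.coe_Icc, Set.mem_Icc] at ha hb
      simp only at h
      rw [expand_last_val ha.1 ha.2, expand_last_val hb.1 hb.2] at h
      exact enum_inj ha.1 (by rw [hL2]; omega) hb.1 (by rw [hL2]; omega) h
  rw [hL2, hcard]

lemma reduce_expand {L : Finset ℕ} {G : ℕ → ℕ → ℕ}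
    (hL1 : L ⊆ Finset.Icc 1 (k * (n + 1))) (hL2 : L.card = k) (hG : IsFilling n k G) :
    reduceF n k (expandF n k L G) = G := by
  have hE := expand_isFilling hL1 hL2 hG
  have hlast := reduce_expand_last hL1 hL2 hG
  funext i j
  by_cases h1 : 1 ≤ i ∧ i ≤ k ∧ 1 ≤ j ∧ j ≤ n
  · obtain ⟨hi1, hi2, hj1, hj2⟩ := h1
    rw [reduce_val hE hi1 hi2 hj1 hj2, hlast, expand_in_val hi1 hi2 hj1 hj2]
    have g := hG.mem_Icc hi1 hi2 hj1 hj2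
    exact rk_enum g.1 (by rw [compl_card' hL1 hL2]; omega)
  · simp only [reduceF, if_neg h1]
    exact (hG.zero h1).symm

end Inverses

lemma card_mid (j k : ℕ) (U : Set (ℕ → ℕ → ℕ)) (n : ℕ) :
    Nat.card {F : ℕ → ℕ → ℕ // IsFilling (n + 1) k F ∧
        ∀ i, i + j ≤ n + 1 → ¬ HasUMatch (n + 1) j k U F i}
      = (k * (n + 1)).choose k * noMatchCountJ n j k U := by
  have e : {F : ℕ → ℕ → ℕ // IsFilling (n + 1) k F ∧
        ∀ i, i + j ≤ n + 1 → ¬ HasUMatch (n + 1) j k U F i}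
      ≃ {L : Finset ℕ // L ⊆ Finset.Icc 1 (k * (n + 1)) ∧ L.card = k} ×
        {G : ℕ → ℕ → ℕ // IsFilling n k G ∧ ∀ i, ¬ HasUMatch n j k U G i} :=
    { toFun := fun F => (⟨lastSet n k F.1, lastSet_subset F.2.1, lastSet_card F.2.1⟩,
        ⟨reduceF n k F.1, reduce_isFilling F.2.1, reduce_noMatch F.2.1 F.2.2⟩),
      invFun := fun p => ⟨expandF n k p.1.1 p.2.1,
        expand_isFilling p.1.2.1 p.1.2.2 p.2.2.1,
        expand_noMid p.1.2.1 p.1.2.2 p.2.2.1 p.2.2.2⟩,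
      left_inv := fun F => Subtype.ext (expand_reduce F.2.1),
      right_inv := fun p => Prod.ext
        (Subtype.ext (reduce_expand_last p.1.2.1 p.1.2.2 p.2.2.1))
        (Subtype.ext (reduce_expand p.1.2.1 p.1.2.2 p.2.2.1)) }
  rw [Nat.card_congr e, Nat.card_prod, noMatchCountJ]
  congr 1
  have e2 : {L : Finset ℕ // L ⊆ Finset.Icc 1 (k * (n + 1)) ∧ L.card = k}
      ≃ {L : Finset ℕ // L ∈ (Finset.Icc 1 (k * (n + 1))).powersetCard k} :=
    Equiv.subtypeEquivRight (fun L => Finset.mem_powersetCard.symm)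
  rw [Nat.card_congr e2, Nat.card_eq_finsetCard, Finset.card_powersetCard, Nat.card_Icc]
  congr 1

lemma card_split (j k : ℕ) (U : Set (ℕ → ℕ → ℕ)) (n : ℕ) :
    Nat.card {F : ℕ → ℕ → ℕ // IsFilling (n + 1) k F ∧
        ∀ i, i + j ≤ n + 1 → ¬ HasUMatch (n + 1) j k U F i}
      = noMatchCountJ (n + 1) j k U + endMatchCount (n + 1) j k U := by
  classical
  have hfin := fillings_finite (n + 1) k
  have hunion : {F : ℕ → ℕ → ℕ | IsFilling (n + 1) k F ∧
        ∀ i, i + j ≤ n + 1 → ¬ HasUMatch (n + 1) j k U F i}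
      = {F : ℕ → ℕ → ℕ | IsFilling (n + 1) k F ∧ ∀ i, ¬ HasUMatch (n + 1) j k U F i}
        ∪ {F : ℕ → ℕ → ℕ | IsFilling (n + 1) k F ∧
            ∀ i, HasUMatch (n + 1) j k U F i ↔ i = n + 1 + 1 - j} := by
    ext F
    simp only [Set.mem_setOf_eq, Set.mem_union]
    constructor
    · rintro ⟨hfill, hmid⟩
      by_cases hex : ∃ i, HasUMatch (n + 1) j k U F i
      · right
        obtain ⟨i0, hm0⟩ := hex
        have hi0 : i0 = n + 1 + 1 - j := by
          have ha := hm0.1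
          have hb := hm0.2.1
          have hc : ¬ (i0 + j ≤ n + 1) := fun h => hmid i0 h hm0
          omega
        refine ⟨hfill, fun i => ⟨fun hm => ?_, fun he => ?_⟩⟩
        · have ha := hm.1
          have hb := hm.2.1
          have hc : ¬ (i + j ≤ n + 1) := fun h => hmid i h hm
          omega
        · subst he
          rwa [← hi0]
      · left
        exact ⟨hfill, fun i hm => hex ⟨i, hm⟩⟩
    · rintro (⟨hfill, hno⟩ | ⟨hfill, hiff⟩)
      · exact ⟨hfill, fun i _ hm => hno i hm⟩
      · refine ⟨hfill, fun i hij hm => ?_⟩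
        have ha := (hiff i).mp hm
        have hb := hm.1
        omega
  have hdisj : Disjoint
      {F : ℕ → ℕ → ℕ | IsFilling (n + 1) k F ∧ ∀ i, ¬ HasUMatch (n + 1) j k U F i}
      {F : ℕ → ℕ → ℕ | IsFilling (n + 1) k F ∧
        ∀ i, HasUMatch (n + 1) j k U F i ↔ i = n + 1 + 1 - j} := by
    rw [Set.disjoint_left]
    rintro F ⟨_, hno⟩ ⟨_, hiff⟩
    exact hno _ ((hiff _).mpr rfl)
  have h1 : Nat.card {F : ℕ → ℕ → ℕ // IsFilling (n + 1) k F ∧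
        ∀ i, i + j ≤ n + 1 → ¬ HasUMatch (n + 1) j k U F i}
      = Set.ncard {F : ℕ → ℕ → ℕ | IsFilling (n + 1) k F ∧
        ∀ i, i + j ≤ n + 1 → ¬ HasUMatch (n + 1) j k U F i} :=
    Nat.card_coe_set_eq _
  have h2 : noMatchCountJ (n + 1) j k U
      = Set.ncard {F : ℕ → ℕ → ℕ | IsFilling (n + 1) k F ∧
          ∀ i, ¬ HasUMatch (n + 1) j k U F i} :=
    Nat.card_coe_set_eq _
  have h3 : endMatchCount (n + 1) j k U
      = Set.ncard {F : ℕ → ℕ → ℕ | IsFilling (n + 1) k F ∧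
          ∀ i, HasUMatch (n + 1) j k U F i ↔ i = n + 1 + 1 - j} :=
    Nat.card_coe_set_eq _
  rw [h1, hunion, Set.ncard_union_eq hdisj (hfin.subset fun F hF => hF.1)
    (hfin.subset fun F hF => hF.1), h2, h3]

/-- `binom(k(n+1), k) · A_{n,k}^Υ = A_{n+1,k}^Υ + E_{n+1,k}^Υ` for all `n ≥ 0`. -/
theorem stmt6 (j k : ℕ) (hj : 1 ≤ j) (hk : 1 ≤ k) (U : Set (ℕ → ℕ → ℕ))
    (hU : ∀ P ∈ U, IsFilling j k P) (n : ℕ) :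
    Nat.choose (k * (n + 1)) k * noMatchCountJ n j k U =
      noMatchCountJ (n + 1) j k U + endMatchCount (n + 1) j k U :=
  (card_mid j k U n).symm.trans (card_split j k U n)
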